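/- Let f: ℂ^{NK}\{0} → ℝ, f(v) = Π_{k=1}^{K} (vᴴ A_k v)/(vᴴ B_k v) · Π_{n=1}^{N} (vᴴ E_n v)^{−c_n}, with A_k, B_k, E_n Hermitian positive definite and c_n ≥ 0 real. Then the (Wirtinger) gradient of log f at v satisfies ∂(log f)/∂v̄ᴴ = (1/ln 2 omitted) Σ_k [A_k v/(vᴴA_k v) − B_k v/(vᴴB_k v)] − Σ_n c_n E_n v/(vᴴ E_n v), and this gradient vanishes at v if and only if A_KKT(v) v = λ_v(v) B_KKT(v) v, where A_KKT(v) = Σ_k A_k/(vᴴA_kv) · Π_ℓ(vᴴA_ℓv), B_KKT(v) = [Σ_k B_k/(vᴴB_kv) + Σ_n c_n E_n/(vᴴE_nv)] · Π_ℓ(vᴴB_ℓv) · Π_m(vᴴE_mv)^{c_m}, and λ_v(v) = f(v). -/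

import Mathlib

open Matrix Finset ComplexOrder

private lemma mySum_mulVec {m ι : Type*} [Fintype m] (s : Finset ι)
    (f : ι → Matrix m m ℂ) (v : m → ℂ) :
    (∑ i ∈ s, f i) *ᵥ v = ∑ i ∈ s, f i *ᵥ v := by
  ext j
  simp only [Matrix.mulVec, dotProduct, Matrix.sum_apply, Finset.sum_apply, Finset.sum_mul]
  rw [Finset.sum_comm]

theorem stmt14 {M K N : ℕ}
    (A B : Fin K → Matrix (Fin M) (Fin M) ℂ) (E : Fin N → Matrix (Fin M) (Fin M) ℂ)
    (hA : ∀ k, (A k).PosDef) (hB : ∀ k, (B k).PosDef) (hE : ∀ n, (E n).PosDef)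
    (c : Fin N → ℝ) (hc : ∀ n, 0 ≤ c n)
    (v : Fin M → ℂ) (hv : v ≠ 0) :
    letI aA : Fin K → ℝ := fun k => (star v ⬝ᵥ ((A k) *ᵥ v)).re
    letI aB : Fin K → ℝ := fun k => (star v ⬝ᵥ ((B k) *ᵥ v)).re
    letI aE : Fin N → ℝ := fun n => (star v ⬝ᵥ ((E n) *ᵥ v)).re
    letI lam : ℝ := (∏ k, aA k / aB k) * ∏ n, (aE n) ^ (-(c n))
    letI AKKT : Matrix (Fin M) (Fin M) ℂ := (∏ ℓ, aA ℓ) • ∑ k, (aA k)⁻¹ • A k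
    letI BKKT : Matrix (Fin M) (Fin M) ℂ :=
      ((∏ ℓ, aB ℓ) * ∏ m, (aE m) ^ (c m)) •
        (∑ k, (aB k)⁻¹ • B k + ∑ n, (c n * (aE n)⁻¹) • E n)
    ((∑ k, ((aA k)⁻¹ • ((A k) *ᵥ v) - (aB k)⁻¹ • ((B k) *ᵥ v)))
        - ∑ n, (c n * (aE n)⁻¹) • ((E n) *ᵥ v) = 0)
      ↔ AKKT *ᵥ v = lam • (BKKT *ᵥ v) := by
  beta_reduce
  set aA : Fin K → ℝ := fun k => (star v ⬝ᵥ ((A k) *ᵥ v)).re with haAd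
  set aB : Fin K → ℝ := fun k => (star v ⬝ᵥ ((B k) *ᵥ v)).re with haBd
  set aE : Fin N → ℝ := fun n => (star v ⬝ᵥ ((E n) *ᵥ v)).re with haEd
  set lam : ℝ := (∏ k, aA k / aB k) * ∏ n, (aE n) ^ (-(c n)) with hlamd
  set AKKT : Matrix (Fin M) (Fin M) ℂ := (∏ ℓ, aA ℓ) • ∑ k, (aA k)⁻¹ • A k with hAK
  set BKKT : Matrix (Fin M) (Fin M) ℂ :=
      ((∏ ℓ, aB ℓ) * ∏ m, (aE m) ^ (c m)) •
        (∑ k, (aB k)⁻¹ • B k + ∑ n, (c n * (aE n)⁻¹) • E n) with hBK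
  have haA : ∀ k, 0 < aA k := fun k => by
    have := (hA k).dotProduct_mulVec_pos hv
    rw [Complex.lt_def] at this
    simpa using this.1
  have haB : ∀ k, 0 < aB k := fun k => by
    have := (hB k).dotProduct_mulVec_pos hv
    rw [Complex.lt_def] at this
    simpa using this.1
  have haE : ∀ n, 0 < aE n := fun n => by
    have := (hE n).dotProduct_mulVec_pos hv
    rw [Complex.lt_def] at this
    simpa using this.1
  -- key scalar identity
  have hlam : lam * ((∏ ℓ, aB ℓ) * ∏ m, (aE m) ^ (c m)) = ∏ ℓ, aA ℓ := by
    have h1 : (∏ k, aA k / aB k) * ∏ ℓ, aB ℓ = ∏ ℓ, aA ℓ := by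
      rw [← Finset.prod_mul_distrib]
      exact Finset.prod_congr rfl fun k _ => div_mul_cancel₀ _ (haB k).ne'
    have h2 : (∏ n, (aE n) ^ (-(c n))) * ∏ m, (aE m) ^ (c m) = 1 := by
      rw [← Finset.prod_mul_distrib]
      rw [Finset.prod_eq_one]
      intro n _
      rw [← Real.rpow_add (haE n)]
      simp
    calc lam * ((∏ ℓ, aB ℓ) * ∏ m, (aE m) ^ (c m))
        = ((∏ k, aA k / aB k) * ∏ ℓ, aB ℓ) *
            ((∏ n, (aE n) ^ (-(c n))) * ∏ m, (aE m) ^ (c m)) := by ring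
      _ = ∏ ℓ, aA ℓ := by rw [h1, h2, mul_one]
  have hP : (0:ℝ) < ∏ ℓ, aA ℓ := Finset.prod_pos fun ℓ _ => haA ℓ
  set SA : Fin M → ℂ := ∑ k, (aA k)⁻¹ • ((A k) *ᵥ v) with hSA
  set SB : Fin M → ℂ := ∑ k, (aB k)⁻¹ • ((B k) *ᵥ v) with hSB
  set SE : Fin M → ℂ := ∑ n, (c n * (aE n)⁻¹) • ((E n) *ᵥ v) with hSE
  have hrhsA : AKKT *ᵥ v = (∏ ℓ, aA ℓ) • SA := by
    simp [hAK, smul_mulVec, mySum_mulVec, hSA]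
  have hrhsB : BKKT *ᵥ v = ((∏ ℓ, aB ℓ) * ∏ m, (aE m) ^ (c m)) • (SB + SE) := by
    simp [hBK, smul_mulVec, Matrix.add_mulVec, mySum_mulVec, hSB, hSE,
      mul_smul]
  have hlhs : (∑ k, ((aA k)⁻¹ • ((A k) *ᵥ v) - (aB k)⁻¹ • ((B k) *ᵥ v)))
      - ∑ n, (c n * (aE n)⁻¹) • ((E n) *ᵥ v) = SA - SB - SE := by
    rw [hSA, hSB, hSE, Finset.sum_sub_distrib]
  rw [hlhs, hrhsA, hrhsB, smul_smul, hlam]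
  constructor
  · intro h
    rw [sub_sub, sub_eq_zero] at h
    rw [h]
  · intro h
    have h' : SA = SB + SE := smul_right_injective (Fin M → ℂ) hP.ne' h
    rw [h']; abel
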